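/- Let V be a finite-dimensional complex inner product space and let A₁, A₂ be positive-semidefinite self-adjoint linear operators on V with null spaces L₁ = ker A₁ and L₂ = ker A₂ satisfying L₁ ∩ L₂ = {0}. Suppose v > 0 is such that ⟨x, Aᵢ x⟩ ≥ v‖x‖² for every x orthogonal to Lᵢ (i = 1, 2). Let c = sup{|⟨x, y⟩| : x ∈ L₁, y ∈ L₂, ‖x‖ = ‖y‖ = 1}. Then for every x ∈ V, ⟨x, (A₁ + A₂) x⟩ ≥ v(1 − c)‖x‖². -/

import Mathlib

open scoped InnerProductSpace

/-- **Kitaev's geometric lemma** (Lemma 14.4 of Kitaev–Shen–Vyalyi).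
If `A₁, A₂` are positive-semidefinite self-adjoint operators whose kernels intersect
trivially, each with spectral gap at least `v` (i.e. `⟨x, Aᵢ x⟩ ≥ v‖x‖²` for `x ⟂ ker Aᵢ`),
and `c = cos θ` is the cosine of the angle between the kernels, then
`A₁ + A₂ ⪰ v (1 − c)`. -/
theorem kitaev_geometric_lemma
    {V : Type*} [NormedAddCommGroup V] [InnerProductSpace ℂ V] [FiniteDimensional ℂ V]
    (A₁ A₂ : V →ₗ[ℂ] V)
    (hA₁_sa : ∀ x y : V, ⟪A₁ x, y⟫_ℂ = ⟪x, A₁ y⟫_ℂ)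
    (hA₂_sa : ∀ x y : V, ⟪A₂ x, y⟫_ℂ = ⟪x, A₂ y⟫_ℂ)
    (hA₁_pos : ∀ x : V, 0 ≤ (⟪x, A₁ x⟫_ℂ).re)
    (hA₂_pos : ∀ x : V, 0 ≤ (⟪x, A₂ x⟫_ℂ).re)
    (htriv : LinearMap.ker A₁ ⊓ LinearMap.ker A₂ = ⊥)
    (v : ℝ) (hv : 0 < v)
    (hgap₁ : ∀ x ∈ (LinearMap.ker A₁)ᗮ, v * ‖x‖ ^ 2 ≤ (⟪x, A₁ x⟫_ℂ).re)
    (hgap₂ : ∀ x ∈ (LinearMap.ker A₂)ᗮ, v * ‖x‖ ^ 2 ≤ (⟪x, A₂ x⟫_ℂ).re)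
    (c : ℝ)
    (hc : c = sSup {r : ℝ | ∃ x ∈ LinearMap.ker A₁, ∃ y ∈ LinearMap.ker A₂,
        ‖x‖ = 1 ∧ ‖y‖ = 1 ∧ r = ‖⟪x, y⟫_ℂ‖}) :
    ∀ x : V, v * (1 - c) * ‖x‖ ^ 2 ≤ (⟪x, (A₁ + A₂) x⟫_ℂ).re := by
  intro x
  set L₁ := LinearMap.ker A₁ with hL₁
  set L₂ := LinearMap.ker A₂ with hL₂
  set S : Set ℝ := {r : ℝ | ∃ x ∈ L₁, ∃ y ∈ L₂,
        ‖x‖ = 1 ∧ ‖y‖ = 1 ∧ r = ‖⟪x, y⟫_ℂ‖} with hS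
  have hSbdd : BddAbove S := by
    refine ⟨1, ?_⟩
    rintro r ⟨u, hu, w, hw, hu1, hw1, rfl⟩
    calc ‖⟪u, w⟫_ℂ‖ ≤ ‖u‖ * ‖w‖ := norm_inner_le_norm u w
      _ = 1 := by rw [hu1, hw1, mul_one]
  have hc0 : 0 ≤ c := by
    rcases Set.eq_empty_or_nonempty S with hE | ⟨r, hr⟩
    · rw [hc, hE, Real.sSup_empty]
    · obtain ⟨u, hu, w, hw, hu1, hw1, rfl⟩ := hr
      calc (0:ℝ) ≤ ‖⟪u, w⟫_ℂ‖ := norm_nonneg _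
        _ ≤ c := by rw [hc]; exact le_csSup hSbdd ⟨u, hu, w, hw, hu1, hw1, rfl⟩
  set a : V := (Submodule.orthogonalProjectionOnto L₁ x : V) with ha
  set b : V := (Submodule.orthogonalProjectionOnto L₂ x : V) with hb
  have haL : a ∈ L₁ := (Submodule.orthogonalProjectionOnto L₁ x).2
  have hbL : b ∈ L₂ := (Submodule.orthogonalProjectionOnto L₂ x).2
  have hxa : x - a ∈ L₁ᗮ := Submodule.sub_starProjection_mem_orthogonal (K := L₁) x
  have hxb : x - b ∈ L₂ᗮ := Submodule.sub_starProjection_mem_orthogonal (K := L₂) x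
  -- quadratic reduction
  have hred : ∀ (A : V →ₗ[ℂ] V) (u : V), (∀ y z : V, ⟪A y, z⟫_ℂ = ⟪y, A z⟫_ℂ) →
      u ∈ LinearMap.ker A → ⟪x, A x⟫_ℂ = ⟪x - u, A (x - u)⟫_ℂ := by
    intro A u hsa hu
    have hAu : A u = 0 := hu
    have h1 : A (x - u) = A x := by rw [map_sub, hAu, sub_zero]
    have h2 : ⟪u, A (x - u)⟫_ℂ = 0 := by
      rw [← hsa u (x - u), hAu, inner_zero_left]
    calc ⟪x, A x⟫_ℂ = ⟪(x - u) + u, A (x - u)⟫_ℂ := by rw [h1, sub_add_cancel]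
      _ = ⟪x - u, A (x - u)⟫_ℂ := by rw [inner_add_left, h2, add_zero]
  -- norm splitting
  have hsplit : ∀ (K : Submodule ℂ V) (u : V), u ∈ K → x - u ∈ Kᗮ →
      ‖x - u‖ ^ 2 = ‖x‖ ^ 2 - ‖u‖ ^ 2 := by
    intro K u hu hxu
    have h0 : ⟪u, x - u⟫_ℂ = 0 := hxu u hu
    have := norm_add_sq (𝕜 := ℂ) u (x - u)
    rw [h0] at this
    simp only [map_zero, mul_zero, add_zero, zero_mul] at this
    have hx : u + (x - u) = x := by abel
    rw [hx] at this
    linarith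
  have hna : ‖x - a‖ ^ 2 = ‖x‖ ^ 2 - ‖a‖ ^ 2 := hsplit L₁ a haL hxa
  have hnb : ‖x - b‖ ^ 2 = ‖x‖ ^ 2 - ‖b‖ ^ 2 := hsplit L₂ b hbL hxb
  -- ⟪u, x⟫ real part = ‖u‖²
  have hinx : ∀ (K : Submodule ℂ V) (u : V), u ∈ K → x - u ∈ Kᗮ →
      ⟪u, x⟫_ℂ = (‖u‖ ^ 2 : ℝ) := by
    intro K u hu hxu
    have h0 : ⟪u, x - u⟫_ℂ = 0 := hxu u hu
    have : ⟪u, x⟫_ℂ = ⟪u, u⟫_ℂ + ⟪u, x - u⟫_ℂ := by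
      rw [← inner_add_right]; congr 1; abel
    rw [this, h0, add_zero, inner_self_eq_norm_sq_to_K]
    norm_num
  -- inner bound between projections
  have hab : (⟪a, b⟫_ℂ).re ≤ c * (‖a‖ * ‖b‖) := by
    rcases eq_or_ne a 0 with h | hane
    · simp [h, mul_nonneg hc0 (mul_nonneg (norm_nonneg _) (norm_nonneg _))]
    rcases eq_or_ne b 0 with h | hbne
    · simp [h, mul_nonneg hc0 (mul_nonneg (norm_nonneg _) (norm_nonneg _))]
    have hna' : (0:ℝ) < ‖a‖ := norm_pos_iff.mpr hane
    have hnb' : (0:ℝ) < ‖b‖ := norm_pos_iff.mpr hbne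
    set u : V := ((‖a‖⁻¹ : ℝ) : ℂ) • a with hu
    set w : V := ((‖b‖⁻¹ : ℝ) : ℂ) • b with hw
    have huL : u ∈ L₁ := L₁.smul_mem _ haL
    have hwL : w ∈ L₂ := L₂.smul_mem _ hbL
    have hu1 : ‖u‖ = 1 := by
      rw [hu, norm_smul, Complex.norm_real, Real.norm_eq_abs, abs_inv, abs_of_pos hna',
        inv_mul_cancel₀ hna'.ne']
    have hw1 : ‖w‖ = 1 := by
      rw [hw, norm_smul, Complex.norm_real, Real.norm_eq_abs, abs_inv, abs_of_pos hnb',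
        inv_mul_cancel₀ hnb'.ne']
    have hmem : ‖⟪u, w⟫_ℂ‖ ∈ S := ⟨u, huL, w, hwL, hu1, hw1, rfl⟩
    have hle : ‖⟪u, w⟫_ℂ‖ ≤ c := by rw [hc]; exact le_csSup hSbdd hmem
    have hval : ‖⟪a, b⟫_ℂ‖ = ‖a‖ * ‖b‖ * ‖⟪u, w⟫_ℂ‖ := by
      rw [hu, hw, inner_smul_left, inner_smul_right]
      rw [Complex.conj_ofReal]
      rw [norm_mul, norm_mul, Complex.norm_real, Complex.norm_real,
        Real.norm_eq_abs, Real.norm_eq_abs, abs_inv, abs_inv,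
        abs_of_pos hna', abs_of_pos hnb']
      field_simp
    have h1 : (⟪a, b⟫_ℂ).re ≤ ‖⟪a, b⟫_ℂ‖ := by
      exact Complex.re_le_norm _
    have h2 : ‖⟪a, b⟫_ℂ‖ ≤ c * (‖a‖ * ‖b‖) := by
      rw [hval]
      calc ‖a‖ * ‖b‖ * ‖⟪u, w⟫_ℂ‖ ≤ ‖a‖ * ‖b‖ * c := by
            exact mul_le_mul_of_nonneg_left hle (by positivity)
        _ = c * (‖a‖ * ‖b‖) := by ring
    linarith
  -- key inequality : ‖a‖² + ‖b‖² ≤ (1+c) ‖x‖²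
  have hkey : ‖a‖ ^ 2 + ‖b‖ ^ 2 ≤ (1 + c) * ‖x‖ ^ 2 := by
    have h1 : (⟪a + b, x⟫_ℂ).re = ‖a‖ ^ 2 + ‖b‖ ^ 2 := by
      rw [inner_add_left, Complex.add_re, hinx L₁ a haL hxa, hinx L₂ b hbL hxb,
        Complex.ofReal_re, Complex.ofReal_re]
    have h2 : (⟪a + b, x⟫_ℂ).re ≤ ‖a + b‖ * ‖x‖ := by
      refine le_trans ?_ (norm_inner_le_norm (𝕜 := ℂ) (a + b) x)
      exact Complex.re_le_norm _
    have h3 : ‖a + b‖ ^ 2 ≤ (1 + c) * (‖a‖ ^ 2 + ‖b‖ ^ 2) := by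
      have hn := norm_add_sq (𝕜 := ℂ) a b
      have h2ab : 2 * ‖a‖ * ‖b‖ ≤ ‖a‖ ^ 2 + ‖b‖ ^ 2 := by nlinarith [sq_nonneg (‖a‖ - ‖b‖)]
      simp only [RCLike.re_to_complex] at hn
      nlinarith [hab, hc0, mul_le_mul_of_nonneg_left h2ab hc0]
    have hSnn : (0:ℝ) ≤ ‖a‖ ^ 2 + ‖b‖ ^ 2 := by positivity
    rcases eq_or_lt_of_le hSnn with h | h
    · nlinarith [sq_nonneg ‖x‖]
    · have h4 : ‖a‖ ^ 2 + ‖b‖ ^ 2 ≤ ‖a + b‖ * ‖x‖ := h1 ▸ h2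
      nlinarith [norm_nonneg (a + b), norm_nonneg x, sq_nonneg (‖a + b‖ - ‖x‖)]
  -- conclude
  have hg1 : v * (‖x‖ ^ 2 - ‖a‖ ^ 2) ≤ (⟪x, A₁ x⟫_ℂ).re := by
    rw [hred A₁ a hA₁_sa haL, ← hna]
    exact hgap₁ _ hxa
  have hg2 : v * (‖x‖ ^ 2 - ‖b‖ ^ 2) ≤ (⟪x, A₂ x⟫_ℂ).re := by
    rw [hred A₂ b hA₂_sa hbL, ← hnb]
    exact hgap₂ _ hxb
  have hadd : (⟪x, (A₁ + A₂) x⟫_ℂ).re = (⟪x, A₁ x⟫_ℂ).re + (⟪x, A₂ x⟫_ℂ).re := by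
    simp [inner_add_right]
  rw [hadd]
  nlinarith [hkey, hv.le]
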